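/- The insertion bijection preserves path weights: if π is an irregular chain and ℘(π) is obtained by inserting B = A ∪ {b} with b = mM(C\A) between consecutive sets A ⊊ C of π, then the total weight satisfies α(℘(π)) = α(π). Equivalently, 2ℓ({b} ∩ J', C\B) − 2ℓ(C\B, {b} ∩ J'') = 0 for b = mM(C\A). -/

import Mathlib

/-- `mM K` is `min (K ∩ J')` if `K ∩ J'` is nonempty, and `max (K ∩ J'')` otherwise
(with junk value `0` when both are empty). -/
def mM (J' J'' K : Finset ℕ) : ℕ :=
  (K ∩ J').min.untopD ((K ∩ J'').max.unbotD 0)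

/-- The augmented entry `A_k` of the chain `L = (A_1, …, A_p)`: `A_0 = ∅`,
`A_k = L[k-1]` for `1 ≤ k ≤ p`, and `A_k = J` for `k > p`. -/
def elt (J : Finset ℕ) (L : List (Finset ℕ)) (k : ℕ) : Finset ℕ :=
  if k = 0 then ∅ else L.getD (k - 1) J

/-- `L` is regular at position `i₀` (`1 ≤ i₀ ≤ p`, with `A_0 = ∅`, `A_{p+1} = J`):
`|A_i| = i` for all `i ≤ i₀` and `A_{i₀} \ A_{i₀−1} = {mM(A_{i₀+1} \ A_{i₀−1})}`. -/
def RegularAt (J' J'' : Finset ℕ) (L : List (Finset ℕ)) (i₀ : ℕ) : Prop :=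
  1 ≤ i₀ ∧ i₀ ≤ L.length ∧
  (∀ i, 1 ≤ i → i ≤ i₀ → (elt (J' ∪ J'') L i).card = i) ∧
  elt (J' ∪ J'') L i₀ \ elt (J' ∪ J'') L (i₀ - 1)
    = {mM J' J'' (elt (J' ∪ J'') L (i₀ + 1) \ elt (J' ∪ J'') L (i₀ - 1))}

/-- A chain is irregular if it is regular at no position. -/
def Irregular (J' J'' : Finset ℕ) (L : List (Finset ℕ)) : Prop :=
  ∀ i₀, ¬ RegularAt J' J'' L i₀

/-- `𝔓₀`: nonempty strict chains `∅ ⊊ A_1 ⊊ ⋯ ⊊ A_p ⊊ J`. -/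
def P0 (J : Finset ℕ) : Set (List (Finset ℕ)) :=
  {L | L ≠ [] ∧ L.Chain' (· ⊂ ·) ∧ ∀ A ∈ L, ∅ ⊂ A ∧ A ⊂ J}

/-- The elements of `J''` in increasing order followed by those of `J'` in
decreasing order. -/
def sortedJ (J' J'' : Finset ℕ) : List ℕ :=
  J''.sort (· ≤ ·) ++ (J'.sort (· ≤ ·)).reverse

/-- The chain of initial segments `(A_1, …, A_m)` of a list `s`,
`A_k = {s_1, …, s_k}`. -/
def chainOf (s : List ℕ) (m : ℕ) : List (Finset ℕ) :=
  (List.range m).map (fun k => (s.take (k + 1)).toFinset)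

/-- The maximal chain `1̂`, adding the elements of `J''` in increasing order and
then those of `J'` in decreasing order, ending at `J`. -/
def oneHat (J' J'' : Finset ℕ) : List (Finset ℕ) :=
  chainOf (sortedJ J' J'') (sortedJ J' J'').length

/-- The chain `π^{1̂}`: same as `1̂` but stopping just before `J`. -/
def piOneHat (J' J'' : Finset ℕ) : List (Finset ℕ) :=
  chainOf (sortedJ J' J'') ((sortedJ J' J'').length - 1)

/-- The path `0̂ = (∅)`. -/
def zeroHat : List (Finset ℕ) := [∅]

/-- `𝔓 = 𝔓₀ ∪ {0̂, 1̂}`. -/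
def PP (J' J'' : Finset ℕ) : Set (List (Finset ℕ)) :=
  P0 (J' ∪ J'') ∪ {zeroHat, oneHat J' J''}

/-- The first gap position `i₀`: the length of the maximal initial segment of the
chain along which the set sizes increase by exactly one. -/
def gapIdx (L : List (Finset ℕ)) : ℕ :=
  ((L.zip (List.range L.length)).takeWhile
    (fun p => decide (p.1.card = p.2 + 1))).length

/-- The insertion map `℘`: inserts `B = A_{i₀} ∪ {mM(A_{i₀+1} \ A_{i₀})}` at the
first gap position; `℘(0̂) = ({min J'})` if `J' ≠ ∅`, else `({max J''})`. -/
def insMap (J' J'' : Finset ℕ) (L : List (Finset ℕ)) : List (Finset ℕ) :=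
  if L = zeroHat then [{mM J' J'' (J' ∪ J'')}]
  else
    L.take (gapIdx L) ++
      (elt (J' ∪ J'') L (gapIdx L) ∪
        {mM J' J'' (elt (J' ∪ J'') L (gapIdx L + 1) \ elt (J' ∪ J'') L (gapIdx L))})
      :: L.drop (gapIdx L)

/-- `linv S T` counts pairs `(s,t) ∈ S × T` with `s > t`. -/
def linv (S T : Finset ℕ) : ℕ := ((S ×ˢ T).filter (fun p => p.2 < p.1)).card

/-- The weight exponent
`E(A,B) = −ℓ(J\B, B\A) − ℓ(B\A, A) + (2|J\B| − |I|)|(B\A) ∩ J'|`. -/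
def wexp (I J' J'' A B : Finset ℕ) : ℤ :=
  -(linv ((J' ∪ J'') \ B) (B \ A) : ℤ) - (linv (B \ A) A : ℤ)
    + (2 * (((J' ∪ J'') \ B).card : ℤ) - (I.card : ℤ)) * (((B \ A) ∩ J').card : ℤ)

/-- The edge weight `α_A^B = (−q)^{E(A,B)}`. -/
noncomputable def alphaWt {k : Type*} [Field k] (q : k) (I J' J'' A B : Finset ℕ) : k :=
  (-q) ^ (wexp I J' J'' A B)

/-- The weight of a chain `(A_1, …, A_p)`: the product
`α_∅^{A_1} α_{A_1}^{A_2} ⋯ α_{A_p}^{J}` of the edge weights of the chain augmented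
by `∅` at the start and `J` at the end. -/
noncomputable def wt {k : Type*} [Field k] (q : k) (I J' J'' : Finset ℕ)
    (L : List (Finset ℕ)) : k :=
  ∏ i ∈ Finset.range (L.length + 1),
    alphaWt q I J' J'' (elt (J' ∪ J'') L i) (elt (J' ∪ J'') L (i + 1))


lemma linv_eq_zero {S T : Finset ℕ} (h : ∀ s ∈ S, ∀ t ∈ T, ¬ t < s) : linv S T = 0 := by
  unfold linv
  rw [Finset.card_eq_zero, Finset.filter_eq_empty_iff]
  rintro ⟨s, t⟩ hm
  simp only [Finset.mem_product] at hm
  exact h s hm.1 t hm.2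

lemma linv_union_right {S T₁ T₂ : Finset ℕ} (h : Disjoint T₁ T₂) :
    linv S (T₁ ∪ T₂) = linv S T₁ + linv S T₂ := by
  unfold linv
  rw [Finset.product_union, Finset.filter_union, Finset.card_union_of_disjoint]
  exact Finset.disjoint_filter_filter (Finset.disjoint_product.mpr (Or.inr h))

lemma linv_union_left {S₁ S₂ T : Finset ℕ} (h : Disjoint S₁ S₂) :
    linv (S₁ ∪ S₂) T = linv S₁ T + linv S₂ T := by
  unfold linv
  rw [Finset.union_product, Finset.filter_union, Finset.card_union_of_disjoint]
  exact Finset.disjoint_filter_filter (Finset.disjoint_product.mpr (Or.inl h))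

lemma linv_add_swap {S T : Finset ℕ} (h : Disjoint S T) :
    linv S T + linv T S = S.card * T.card := by
  have h2 : linv T S = ((S ×ˢ T).filter (fun p => ¬ p.2 < p.1)).card := by
    unfold linv
    apply Finset.card_bij (fun p _ => p.swap)
    · rintro ⟨s, t⟩ hm
      simp only [Finset.mem_filter, Finset.mem_product] at hm ⊢
      exact ⟨⟨hm.1.2, hm.1.1⟩, not_lt.mpr hm.2.le⟩
    · rintro ⟨a, b⟩ _ ⟨c, d⟩ _ hh
      simp [Prod.ext_iff] at hh ⊢; exact hh.symm
    · rintro ⟨s, t⟩ hm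
      simp only [Finset.mem_filter, Finset.mem_product] at hm
      refine ⟨⟨t, s⟩, ?_, rfl⟩
      simp only [Finset.mem_filter, Finset.mem_product]
      have hne : s ≠ t := fun e => (Finset.disjoint_left.mp h hm.1.1) (e ▸ hm.1.2)
      exact ⟨⟨hm.1.2, hm.1.1⟩, lt_of_le_of_ne (not_lt.mp hm.2) hne⟩
  rw [linv, h2, Finset.card_filter_add_card_filter_not, Finset.card_product]

lemma mM_of_inter_nonempty {J' J'' K : Finset ℕ} (h : (K ∩ J').Nonempty) :
    mM J' J'' K ∈ K ∩ J' ∧ ∀ t ∈ K ∩ J', mM J' J'' K ≤ t := by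
  obtain ⟨m, hm⟩ := Finset.min_of_nonempty h
  unfold mM
  rw [hm]
  simp only [WithTop.untopD_coe]
  exact ⟨Finset.mem_of_min hm, fun t ht => Finset.min_le_of_eq ht hm⟩

lemma mM_of_inter_empty {J' J'' K : Finset ℕ} (h : K ∩ J' = ∅) (hne : (K ∩ J'').Nonempty) :
    mM J' J'' K ∈ K ∩ J'' ∧ ∀ t ∈ K ∩ J'', t ≤ mM J' J'' K := by
  obtain ⟨m, hm⟩ := Finset.max_of_nonempty hne
  unfold mM
  rw [h, hm]
  simp only [Finset.min_empty, WithTop.untopD_top, WithBot.unbotD_coe]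
  exact ⟨Finset.mem_of_max hm, fun t ht => Finset.le_max_of_eq ht hm⟩

lemma linv_empty_right' (S : Finset ℕ) : linv S ∅ = 0 := by simp [linv]
lemma linv_empty_left' (T : Finset ℕ) : linv ∅ T = 0 := by simp [linv]

lemma mM_mem {J' J'' K : Finset ℕ} (hne : K.Nonempty) (hK : K ⊆ J' ∪ J'') :
    mM J' J'' K ∈ K := by
  rcases (K ∩ J').eq_empty_or_nonempty with h | h
  · have hK'' : K ∩ J'' = K := by
      apply Finset.inter_eq_left.mpr
      intro x hx
      rcases Finset.mem_union.mp (hK hx) with h1 | h1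
      · exact absurd (Finset.mem_inter.mpr ⟨hx, h1⟩) (by simp [h])
      · exact h1
    exact (Finset.mem_inter.mp (mM_of_inter_empty h (by rw [hK'']; exact hne)).1).1
  · exact (Finset.mem_inter.mp (mM_of_inter_nonempty h).1).1

lemma key_linv {J' J'' K : Finset ℕ} (hdisj : Disjoint J' J'')
    (hlt : ∀ a ∈ J', ∀ b ∈ J'', a < b) (hne : K.Nonempty) (hK : K ⊆ J' ∪ J'') :
    linv ({mM J' J'' K} ∩ J') (K \ {mM J' J'' K}) = 0 ∧
    linv (K \ {mM J' J'' K}) ({mM J' J'' K} ∩ J'') = 0 := by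
  set b := mM J' J'' K with hb
  rcases (K ∩ J').eq_empty_or_nonempty with h | h
  · have hK'' : K ∩ J'' = K := by
      apply Finset.inter_eq_left.mpr
      intro x hx
      rcases Finset.mem_union.mp (hK hx) with h1 | h1
      · exact absurd (Finset.mem_inter.mpr ⟨hx, h1⟩) (by simp [h])
      · exact h1
    obtain ⟨hmem, hmax⟩ := mM_of_inter_empty (J'' := J'') h (by rw [hK'']; exact hne)
    have hbJ'' : b ∈ J'' := (Finset.mem_inter.mp hmem).2
    constructor
    · have : ({b} : Finset ℕ) ∩ J' = ∅ := by
        rw [Finset.singleton_inter_of_notMem]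
        exact fun hb' => (Finset.disjoint_left.mp hdisj hb') hbJ''
      rw [this, linv_empty_left']
    · apply linv_eq_zero
      intro s hs t ht
      have hsK : s ∈ K := (Finset.mem_sdiff.mp hs).1
      have htb : t = b := (Finset.mem_inter.mp ht).1 |> Finset.mem_singleton.mp
      subst htb
      exact not_lt.mpr (hmax s (by rw [hK'']; exact hsK))
  · obtain ⟨hmem, hmin⟩ := mM_of_inter_nonempty (J'' := J'') h
    have hbJ' : b ∈ J' := (Finset.mem_inter.mp hmem).2
    constructor
    · apply linv_eq_zero
      intro s hs t ht
      have hsb : s = b := by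
        simp only [Finset.mem_inter, Finset.mem_singleton] at hs
        exact hs.1
      subst hsb
      have htK : t ∈ K := (Finset.mem_sdiff.mp ht).1
      rcases Finset.mem_union.mp (hK htK) with h1 | h1
      · exact not_lt.mpr (hmin t (Finset.mem_inter.mpr ⟨htK, h1⟩))
      · exact not_lt.mpr (le_of_lt (hlt b hbJ' t h1))
    · have : ({b} : Finset ℕ) ∩ J'' = ∅ := by
        rw [Finset.singleton_inter_of_notMem]
        exact fun hb' => (Finset.disjoint_left.mp hdisj hbJ') hb'
      rw [this, linv_empty_right']

lemma cocycle (I J' J'' : Finset ℕ) (hdisj : Disjoint J' J'') {A B C : Finset ℕ}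
    (hAB : A ⊆ B) (hBC : B ⊆ C) (hCJ : C ⊆ J' ∪ J'') :
    wexp I J' J'' A B + wexp I J' J'' B C =
      wexp I J' J'' A C + 2 * (linv ((B \ A) ∩ J') (C \ B) : ℤ)
        - 2 * (linv (C \ B) ((B \ A) ∩ J'') : ℤ) := by
  set J := J' ∪ J'' with hJ
  have hd12 : Disjoint (B \ A) (C \ B) := by
    refine Finset.disjoint_left.mpr fun x hx hx' => ?_
    exact (Finset.mem_sdiff.mp hx').2 ((Finset.mem_sdiff.mp hx).1)
  have hdJC : Disjoint (J \ C) (C \ B) := by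
    refine Finset.disjoint_left.mpr fun x hx hx' => ?_
    exact (Finset.mem_sdiff.mp hx).2 ((Finset.mem_sdiff.mp hx').1)
  have hdA1 : Disjoint A (B \ A) := Finset.disjoint_sdiff
  have f1 : (J \ C) ∪ (C \ B) = J \ B := Finset.sdiff_union_sdiff_cancel hCJ hBC
  have f2 : (B \ A) ∪ (C \ B) = C \ A := by
    rw [Finset.union_comm]; exact Finset.sdiff_union_sdiff_cancel hBC hAB
  have f3 : A ∪ (B \ A) = B := Finset.union_sdiff_of_subset hAB
  have E1 : linv (J \ B) (B \ A) = linv (J \ C) (B \ A) + linv (C \ B) (B \ A) := by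
    rw [← f1, linv_union_left hdJC]
  have E2 : linv (C \ A) A = linv (B \ A) A + linv (C \ B) A := by
    rw [← f2, linv_union_left hd12]
  have E3 : linv (C \ B) B = linv (C \ B) A + linv (C \ B) (B \ A) := by
    have h := linv_union_right (S := C \ B) hdA1
    rwa [f3] at h
  have E4 : (J \ B).card = (J \ C).card + (C \ B).card := by
    rw [← f1, Finset.card_union_of_disjoint hdJC]
  have E5 : ((C \ A) ∩ J').card = ((B \ A) ∩ J').card + ((C \ B) ∩ J').card := by
    rw [← f2, Finset.union_inter_distrib_right, Finset.card_union_of_disjoint]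
    exact Finset.disjoint_of_subset_left Finset.inter_subset_left
      (Finset.disjoint_of_subset_right Finset.inter_subset_left hd12)
  have E7 : linv (C \ B) (B \ A)
      = linv (C \ B) ((B \ A) ∩ J') + linv (C \ B) ((B \ A) ∩ J'') := by
    have hBA : (B \ A) ∩ J' ∪ (B \ A) ∩ J'' = B \ A := by
      rw [← Finset.inter_union_distrib_left, Finset.inter_eq_left]
      exact fun x hx => hCJ (hBC (Finset.mem_sdiff.mp hx).1)
    have hd : Disjoint (B \ A ∩ J') (B \ A ∩ J'') :=
      Finset.disjoint_of_subset_left Finset.inter_subset_right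
        (Finset.disjoint_of_subset_right Finset.inter_subset_right hdisj)
    have h := linv_union_right (S := C \ B) hd
    rwa [hBA] at h
  have E8 : linv (J \ C) (C \ A) = linv (J \ C) (B \ A) + linv (J \ C) (C \ B) := by
    rw [← f2, linv_union_right hd12]
  have E6 : linv ((B \ A) ∩ J') (C \ B) + linv (C \ B) ((B \ A) ∩ J')
      = ((B \ A) ∩ J').card * (C \ B).card := by
    exact linv_add_swap (Finset.disjoint_of_subset_left Finset.inter_subset_left hd12)
  have E6' : (linv ((B \ A) ∩ J') (C \ B) : ℤ) + (linv (C \ B) ((B \ A) ∩ J') : ℤ)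
      = (((B \ A) ∩ J').card : ℤ) * ((C \ B).card : ℤ) := by exact_mod_cast E6
  simp only [wexp, ← hJ]
  rw [E1, E2, E3, E4, E5, E7, E8]
  push_cast
  linear_combination (-2 : ℤ) * E6'

lemma elt_ins_le {J B : Finset ℕ} {L : List (Finset ℕ)} {g : ℕ} (hg : g ≤ L.length)
    {i : ℕ} (hi : i ≤ g) : elt J (L.take g ++ B :: L.drop g) i = elt J L i := by
  unfold elt
  rcases Nat.eq_zero_or_pos i with h0 | h0
  · simp [h0]
  · have hne : i ≠ 0 := h0.ne'
    simp only [hne, if_false]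
    have hlen : (L.take g).length = g := List.length_take_of_le hg
    have h1 : i - 1 < (L.take g).length := by omega
    rw [List.getD_append _ _ _ _ h1, List.getD_eq_getElem?_getD, List.getD_eq_getElem?_getD,
      List.getElem?_take]
    have : i - 1 < g := by omega
    simp [this]

lemma elt_ins_eq {J B : Finset ℕ} {L : List (Finset ℕ)} {g : ℕ} (hg : g ≤ L.length) :
    elt J (L.take g ++ B :: L.drop g) (g + 1) = B := by
  unfold elt
  have hlen : (L.take g).length = g := List.length_take_of_le hg
  simp only [Nat.succ_ne_zero, if_false, Nat.add_sub_cancel]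
  rw [List.getD_append_right _ _ _ _ (by omega)]
  simp [hlen]

lemma elt_ins_gt {J B : Finset ℕ} {L : List (Finset ℕ)} {g : ℕ} (hg : g ≤ L.length)
    {i : ℕ} (hi : g + 1 ≤ i) : elt J (L.take g ++ B :: L.drop g) (i + 1) = elt J L i := by
  unfold elt
  have hlen : (L.take g).length = g := List.length_take_of_le hg
  have hne : i ≠ 0 := by omega
  simp only [Nat.succ_ne_zero, if_false, hne]
  rw [List.getD_append_right _ _ _ _ (by omega)]
  rw [hlen, show i + 1 - 1 - g = (i - 1 - g) + 1 by omega]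
  simp only [List.getD_cons_succ]
  rw [List.getD_eq_getElem?_getD, List.getD_eq_getElem?_getD, List.getElem?_drop]
  have : g + (i - 1 - g) = i - 1 := by omega
  rw [this]

lemma prod_ins {k : Type*} [CommMonoid k] (α : Finset ℕ → Finset ℕ → k)
    (J B : Finset ℕ) (L : List (Finset ℕ)) (g : ℕ) (hg : g ≤ L.length)
    (hcoc : α (elt J L g) B * α B (elt J L (g + 1)) = α (elt J L g) (elt J L (g + 1))) :
    ∏ i ∈ Finset.range ((L.take g ++ B :: L.drop g).length + 1),
      α (elt J (L.take g ++ B :: L.drop g) i) (elt J (L.take g ++ B :: L.drop g) (i + 1))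
    = ∏ i ∈ Finset.range (L.length + 1), α (elt J L i) (elt J L (i + 1)) := by
  set n := L.length with hn
  set L' := L.take g ++ B :: L.drop g with hL'
  have hlen : L'.length = n + 1 := by
    simp [hL', List.length_take_of_le hg, hn]
    omega
  rw [hlen]
  set F' : ℕ → k := fun i => α (elt J L' i) (elt J L' (i + 1)) with hF'
  set F : ℕ → k := fun i => α (elt J L i) (elt J L (i + 1)) with hF
  have split1 : ∏ i ∈ Finset.range (n + 2), F' i
      = (∏ i ∈ Finset.range (g + 2), F' i) * ∏ i ∈ Finset.Ico (g + 2) (n + 2), F' i := by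
    rw [Finset.range_eq_Ico, ← Finset.prod_Ico_consecutive _ (Nat.zero_le (g + 2)) (by omega), Finset.range_eq_Ico]
  have split2 : ∏ i ∈ Finset.range (n + 1), F i
      = (∏ i ∈ Finset.range (g + 1), F i) * ∏ i ∈ Finset.Ico (g + 1) (n + 1), F i := by
    rw [Finset.range_eq_Ico, ← Finset.prod_Ico_consecutive _ (Nat.zero_le (g + 1)) (by omega), Finset.range_eq_Ico]
  rw [split1, split2]
  have tail : ∏ i ∈ Finset.Ico (g + 2) (n + 2), F' i
      = ∏ i ∈ Finset.Ico (g + 1) (n + 1), F i := by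
    rw [Finset.prod_Ico_eq_prod_range, Finset.prod_Ico_eq_prod_range]
    have hc : n + 2 - (g + 2) = n + 1 - (g + 1) := by omega
    rw [hc]
    apply Finset.prod_congr rfl
    intro i _
    simp only [hF', hF]
    have h1 : elt J L' (g + 2 + i) = elt J L (g + 1 + i) := by
      rw [show g + 2 + i = (g + 1 + i) + 1 by omega]
      exact elt_ins_gt hg (by omega)
    have h2 : elt J L' (g + 2 + i + 1) = elt J L (g + 1 + i + 1) := by
      rw [show g + 2 + i + 1 = (g + 1 + i + 1) + 1 by omega]
      exact elt_ins_gt hg (by omega)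
    rw [h1, h2]
  have head : ∏ i ∈ Finset.range (g + 2), F' i = ∏ i ∈ Finset.range (g + 1), F i := by
    rw [Finset.prod_range_succ, Finset.prod_range_succ, Finset.prod_range_succ]
    have hinit : ∏ i ∈ Finset.range g, F' i = ∏ i ∈ Finset.range g, F i := by
      apply Finset.prod_congr rfl
      intro i hi
      have hig : i < g := Finset.mem_range.mp hi
      simp only [hF', hF]
      rw [elt_ins_le hg (le_of_lt hig), elt_ins_le hg hig]
    rw [hinit, mul_assoc]
    congr 1
    simp only [hF', hF]
    rw [elt_ins_le hg (le_refl g), elt_ins_eq hg,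
      show g + 1 + 1 = (g + 1) + 1 from rfl, elt_ins_gt hg (le_refl (g + 1))]
    exact hcoc
  rw [head, tail]

lemma elt_subset_J {J : Finset ℕ} {L : List (Finset ℕ)} (hL : L ∈ P0 J) (i : ℕ) :
    elt J L i ⊆ J := by
  obtain ⟨hne, hch, hmem⟩ := hL
  unfold elt
  split
  · exact Finset.empty_subset J
  · rcases lt_or_ge (i - 1) L.length with h | h
    · rw [List.getD_eq_getElem L J h]
      exact (hmem _ (List.getElem_mem h)).2.subset
    · rw [List.getD_eq_default L J h]

lemma elt_ssubset {J : Finset ℕ} {L : List (Finset ℕ)} (hL : L ∈ P0 J) {i : ℕ}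
    (hi : i ≤ L.length) : elt J L i ⊂ elt J L (i + 1) := by
  obtain ⟨hne, hch, hmem⟩ := hL
  have hlpos : 0 < L.length := List.length_pos_iff.mpr hne
  rcases Nat.eq_zero_or_pos i with h0 | h0
  · subst h0
    have h1 : elt J L 1 = L.getD 0 J := by unfold elt; norm_num
    rw [show elt J L 0 = ∅ from rfl, h1, List.getD_eq_getElem L J hlpos]
    exact (hmem _ (List.getElem_mem hlpos)).1
  · rcases lt_or_eq_of_le hi with h | h
    · -- i < length: L[i-1] ⊂ L[i], chain
      unfold elt
      rw [if_neg (by omega), if_neg (by omega), List.getD_eq_getElem L J (show i - 1 < L.length by omega),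
        List.getD_eq_getElem L J (show i + 1 - 1 < L.length by omega)]
      have hidx : i + 1 - 1 = (i - 1) + 1 := by omega
      simp only [hidx]
      exact List.isChain_iff_getElem.mp hch (i - 1) (by omega)
    · -- i = length
      unfold elt
      rw [if_neg (by omega), if_neg (by omega), List.getD_eq_getElem L J (show i - 1 < L.length by omega),
        List.getD_eq_default L J (show L.length ≤ i + 1 - 1 by omega)]
      exact (hmem _ (List.getElem_mem (by omega))).2

lemma mM_singleton {J' J'' : Finset ℕ} {x : ℕ} (hx : x ∈ J' ∪ J'') :
    mM J' J'' {x} = x := by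
  unfold mM
  by_cases h : x ∈ J'
  · rw [Finset.singleton_inter_of_mem h]
    rfl
  · rw [Finset.singleton_inter_of_notMem h]
    have hx'' : x ∈ J'' := (Finset.mem_union.mp hx).resolve_left h
    rw [Finset.singleton_inter_of_mem hx'']
    simp

lemma sortedJ_nodup {J' J'' : Finset ℕ} (hdisj : Disjoint J' J'') :
    (sortedJ J' J'').Nodup := by
  unfold sortedJ
  refine List.Nodup.append (J''.sort_nodup _) (List.nodup_reverse.mpr (J'.sort_nodup _)) ?_
  intro a ha ha'
  rw [Finset.mem_sort] at ha
  rw [List.mem_reverse, Finset.mem_sort] at ha'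
  exact (Finset.disjoint_right.mp hdisj ha) ha'

lemma sortedJ_toFinset (J' J'' : Finset ℕ) :
    (sortedJ J' J'').toFinset = J' ∪ J'' := by
  unfold sortedJ
  ext x
  simp [Finset.mem_sort, or_comm]

lemma elt_oneHat {J' J'' : Finset ℕ} {i : ℕ} (hi : i ≤ (sortedJ J' J'').length) :
    elt (J' ∪ J'') (oneHat J' J'') i = ((sortedJ J' J'').take i).toFinset := by
  unfold elt oneHat chainOf
  rcases Nat.eq_zero_or_pos i with h0 | h0
  · simp [h0]
  · rw [if_neg (by omega)]
    have hlen : i - 1 < (List.range (sortedJ J' J'').length).length := by simp; omega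
    rw [List.getD_eq_getElem _ _ (by simpa using hlen)]
    simp only [List.getElem_map, List.getElem_range]
    rw [show i - 1 + 1 = i by omega]

lemma oneHat_regular {J' J'' : Finset ℕ} (hdisj : Disjoint J' J'')
    (hJ : (J' ∪ J'').Nonempty) :
    RegularAt J' J'' (oneHat J' J'') (sortedJ J' J'').length := by
  have hnd : (sortedJ J' J'').Nodup := sortedJ_nodup hdisj
  have htf : (sortedJ J' J'').toFinset = J' ∪ J'' := sortedJ_toFinset J' J''
  have hsne : sortedJ J' J'' ≠ [] := by
    intro h
    rw [h] at htf
    simp at htf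
    exact Finset.Nonempty.ne_empty hJ htf.symm
  have hm1 : 1 ≤ (sortedJ J' J'').length := List.length_pos_iff.mpr hsne
  have hlenoh : (oneHat J' J'').length = (sortedJ J' J'').length := by
    unfold oneHat chainOf
    simp
  refine ⟨hm1, by omega, ?_, ?_⟩
  · intro i h1 h2
    rw [elt_oneHat (by omega)]
    rw [List.toFinset_card_of_nodup (hnd.sublist (List.take_sublist _ _))]
    rw [List.length_take]
    omega
  · have hlast := List.dropLast_append_getLast hsne
    have hdl : (sortedJ J' J'').dropLast = (sortedJ J' J'').take ((sortedJ J' J'').length - 1) :=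
      List.dropLast_eq_take
    have hxJ : (sortedJ J' J'').getLast hsne ∈ J' ∪ J'' := by
      rw [← htf]
      exact List.mem_toFinset.mpr (List.getLast_mem hsne)
    have hem : elt (J' ∪ J'') (oneHat J' J'') (sortedJ J' J'').length = J' ∪ J'' := by
      rw [elt_oneHat (le_refl _), List.take_length, htf]
    have hem1 : elt (J' ∪ J'') (oneHat J' J'') ((sortedJ J' J'').length - 1)
        = ((sortedJ J' J'').take ((sortedJ J' J'').length - 1)).toFinset :=
      elt_oneHat (by omega)
    have hemp1 : elt (J' ∪ J'') (oneHat J' J'') ((sortedJ J' J'').length + 1) = J' ∪ J'' := by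
      unfold elt
      rw [if_neg (by omega), List.getD_eq_default]
      rw [hlenoh]; omega
    have hxnot : (sortedJ J' J'').getLast hsne
        ∉ ((sortedJ J' J'').take ((sortedJ J' J'').length - 1)).toFinset := by
      rw [← hdl]
      intro hc
      have hmem := List.mem_toFinset.mp hc
      have hnd' := hnd
      rw [← hlast] at hnd'
      exact (List.disjoint_of_nodup_append hnd') hmem (by simp)
    have hsd : (J' ∪ J'') \ ((sortedJ J' J'').take ((sortedJ J' J'').length - 1)).toFinset
        = {(sortedJ J' J'').getLast hsne} := by
      have hsplit : (sortedJ J' J'').toFinset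
          = ((sortedJ J' J'').take ((sortedJ J' J'').length - 1)).toFinset
            ∪ {(sortedJ J' J'').getLast hsne} := by
        conv_lhs => rw [← hlast]
        rw [List.toFinset_append, hdl]
        simp
      ext y
      simp only [Finset.mem_sdiff, ← htf, hsplit, Finset.mem_union, Finset.mem_singleton]
      constructor
      · rintro ⟨h1 | h1, h2⟩
        · exact absurd h1 h2
        · exact h1
      · rintro rfl
        exact ⟨Or.inr rfl, hxnot⟩
    rw [hem, hem1, hemp1, hsd, mM_singleton hxJ]

lemma wexp_of_subset (I J' J'' : Finset ℕ) {A B : Finset ℕ} (h : B ⊆ A) :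
    wexp I J' J'' A B = 0 := by
  have hBA : B \ A = ∅ := Finset.sdiff_eq_empty_iff_subset.mpr h
  simp [wexp, hBA, linv_empty_right', linv_empty_left']

lemma alpha_of_subset {k : Type*} [Field k] (q : k) (I J' J'' : Finset ℕ)
    {A B : Finset ℕ} (h : B ⊆ A) : alphaWt q I J' J'' A B = 1 := by
  rw [alphaWt, wexp_of_subset I J' J'' h, zpow_zero]

lemma sdiff_union_singleton {A C : Finset ℕ} (b : ℕ) :
    C \ (A ∪ {b}) = (C \ A) \ {b} := by
  ext x
  simp only [Finset.mem_sdiff, Finset.mem_union, Finset.mem_singleton]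
  tauto

lemma alpha_step {k : Type*} [Field k] (q : k) (hq : q ≠ 0) (I J' J'' : Finset ℕ)
    (hdisj : Disjoint J' J'') (hlt : ∀ a ∈ J', ∀ b ∈ J'', a < b)
    {A C : Finset ℕ} (hAC : A ⊆ C) (hCJ : C ⊆ J' ∪ J'') (hne : (C \ A).Nonempty) :
    alphaWt q I J' J'' A (A ∪ {mM J' J'' (C \ A)})
      * alphaWt q I J' J'' (A ∪ {mM J' J'' (C \ A)}) C = alphaWt q I J' J'' A C := by
  set b := mM J' J'' (C \ A) with hb
  have hKJ : C \ A ⊆ J' ∪ J'' := Finset.Subset.trans (Finset.sdiff_subset) hCJ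
  have hbCA : b ∈ C \ A := mM_mem hne hKJ
  have hbC : b ∈ C := (Finset.mem_sdiff.mp hbCA).1
  have hbA : b ∉ A := (Finset.mem_sdiff.mp hbCA).2
  have hAB : A ⊆ A ∪ {b} := Finset.subset_union_left
  have hBC : A ∪ {b} ⊆ C := Finset.union_subset hAC (Finset.singleton_subset_iff.mpr hbC)
  have hBA : (A ∪ {b}) \ A = {b} := by
    ext x
    simp only [Finset.mem_sdiff, Finset.mem_union, Finset.mem_singleton]
    constructor
    · rintro ⟨h1 | h1, h2⟩
      · exact absurd h1 h2
      · exact h1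
    · rintro rfl
      exact ⟨Or.inr rfl, hbA⟩
  have hCB : C \ (A ∪ {b}) = (C \ A) \ {b} := sdiff_union_singleton b
  have hc := cocycle I J' J'' hdisj hAB hBC hCJ
  rw [hBA, hCB] at hc
  obtain ⟨k1, k2⟩ := key_linv hdisj hlt hne hKJ
  rw [← hb] at k1 k2
  rw [k1, k2] at hc
  simp only [Nat.cast_zero, mul_zero, sub_zero, add_zero] at hc
  rw [alphaWt, alphaWt, alphaWt, ← zpow_add₀ (neg_ne_zero.mpr hq), hc]

/-- The insertion bijection `℘` preserves path weights: `α(℘(π)) = α(π)` for every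
irregular path `π`. Equivalently, `2ℓ({b} ∩ J', C\B) − 2ℓ(C\B, {b} ∩ J'') = 0`
for `b = mM(C\A)` and `B = A ∪ {b}`. -/
theorem stmt_13 {k : Type*} [Field k] (q : k) (hq : q ≠ 0)
    (I J' J'' : Finset ℕ) (hdisj : Disjoint J' J'')
    (hlt : ∀ a ∈ J', ∀ b ∈ J'', a < b) (hI : Disjoint I (J' ∪ J'')) :
    (∀ π ∈ {π ∈ PP J' J'' | Irregular J' J'' π},
        wt q I J' J'' (insMap J' J'' π) = wt q I J' J'' π) ∧
    (∀ A C : Finset ℕ, A ⊆ C → C ⊆ J' ∪ J'' → (C \ A).Nonempty →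
        (2 * (linv ({mM J' J'' (C \ A)} ∩ J') (C \ (A ∪ {mM J' J'' (C \ A)})) : ℤ)
          - 2 * (linv (C \ (A ∪ {mM J' J'' (C \ A)})) ({mM J' J'' (C \ A)} ∩ J'') : ℤ))
          = 0) := by
  constructor
  · -- weight preservation
    rintro π ⟨hPP, hirr⟩
    rcases hPP with hP0 | hza
    · -- π ∈ P0
      have hne0 : π ≠ zeroHat := by
        intro h
        have := (hP0.2.2 ∅ (by rw [h, zeroHat]; exact List.mem_singleton_self ∅)).1
        exact (lt_irrefl _ this)
      rw [insMap, if_neg hne0]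
      have hg : gapIdx π ≤ π.length := by
        have h1 := (List.takeWhile_sublist
          (l := π.zip (List.range π.length))
          (fun p => decide (p.1.card = p.2 + 1))).length_le
        have h2 : (π.zip (List.range π.length)).length = π.length := by
          rw [List.length_zip, List.length_range, min_self]
        rw [gapIdx]
        omega
      have hAC : elt (J' ∪ J'') π (gapIdx π) ⊂ elt (J' ∪ J'') π (gapIdx π + 1) :=
        elt_ssubset hP0 hg
      have hCJ : elt (J' ∪ J'') π (gapIdx π + 1) ⊆ J' ∪ J'' := elt_subset_J hP0 _
      have hne : (elt (J' ∪ J'') π (gapIdx π + 1) \ elt (J' ∪ J'') π (gapIdx π)).Nonempty :=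
        Finset.sdiff_nonempty.mpr (fun h => hAC.2 h)
      rw [wt, wt]
      exact prod_ins (alphaWt q I J' J'') (J' ∪ J'') _ π (gapIdx π) hg
        (alpha_step q hq I J' J'' hdisj hlt hAC.subset hCJ hne)
    · rcases hza with h0 | h1
      · -- π = 0̂
        subst h0
        rw [insMap, if_pos rfl]
        have e0 : ∀ X : Finset ℕ, elt (J' ∪ J'') [X] 0 = ∅ := fun X => rfl
        have e1 : ∀ X : Finset ℕ, elt (J' ∪ J'') [X] 1 = X := fun X => rfl
        have e2 : ∀ X : Finset ℕ, elt (J' ∪ J'') [X] 2 = J' ∪ J'' := fun X => rfl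
        rw [zeroHat, wt, wt]
        simp only [List.length_singleton]
        rw [Finset.prod_range_succ, Finset.prod_range_succ, Finset.prod_range_zero,
          Finset.prod_range_succ, Finset.prod_range_succ, Finset.prod_range_zero]
        rw [e0, e1, e2, e0, e1, e2, one_mul, one_mul]
        rw [alpha_of_subset q I J' J'' (Finset.Subset.refl ∅), one_mul]
        rcases (J' ∪ J'').eq_empty_or_nonempty with hJe | hJne
        · have hb0 : alphaWt q I J' J'' ∅ {mM J' J'' (J' ∪ J'')} = 1 := by
            rw [alphaWt]
            have : wexp I J' J'' ∅ {mM J' J'' (J' ∪ J'')} = 0 := by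
              have hJ' : J' = ∅ := by
                have := Finset.union_eq_empty.mp hJe
                exact this.1
              rw [wexp, hJe]
              simp [hJ', linv_empty_right', linv_empty_left',
                Finset.empty_sdiff, linv_eq_zero]
            rw [this, zpow_zero]
          have h2 : alphaWt q I J' J'' {mM J' J'' (J' ∪ J'')} (J' ∪ J'') = 1 :=
            alpha_of_subset q I J' J'' (by rw [hJe]; exact Finset.empty_subset _)
          have h3 : alphaWt q I J' J'' ∅ (J' ∪ J'') = 1 :=
            alpha_of_subset q I J' J'' (by rw [hJe])
          rw [hb0, h2, h3, one_mul]
        · have hst := alpha_step q hq I J' J'' hdisj hlt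
            (Finset.empty_subset (J' ∪ J'')) (Finset.Subset.refl (J' ∪ J''))
            (by rwa [Finset.sdiff_empty])
          rwa [Finset.sdiff_empty, Finset.empty_union] at hst
      · -- π = 1̂
        rw [Set.mem_singleton_iff] at h1
        subst h1
        rcases (J' ∪ J'').eq_empty_or_nonempty with hJe | hJne
        · -- J empty : oneHat = []
          obtain ⟨hJ'e, hJ''e⟩ := Finset.union_eq_empty.mp hJe
          have hs : sortedJ J' J'' = [] := by
            rw [sortedJ, hJ'e, hJ''e]
            simp
          have hoh : oneHat J' J'' = [] := by
            rw [oneHat, hs, chainOf]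
            simp
          rw [hoh]
          have hnz : ([] : List (Finset ℕ)) ≠ zeroHat := by
            rw [zeroHat]; simp
          rw [insMap, if_neg hnz]
          have hgap : gapIdx ([] : List (Finset ℕ)) = 0 := rfl
          rw [hgap]
          simp only [List.take_nil, List.drop_nil, List.nil_append]
          rw [wt, wt]
          simp only [List.length_singleton, List.length_nil]
          rw [Finset.prod_range_succ, Finset.prod_range_succ, Finset.prod_range_zero,
            Finset.prod_range_succ, Finset.prod_range_zero, one_mul, one_mul]
          have e0 : ∀ X : Finset ℕ, elt (J' ∪ J'') [X] 0 = ∅ := fun X => rfl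
          have e1 : ∀ X : Finset ℕ, elt (J' ∪ J'') [X] 1 = X := fun X => rfl
          have e2 : ∀ X : Finset ℕ, elt (J' ∪ J'') [X] 2 = J' ∪ J'' := fun X => rfl
          have f0 : elt (J' ∪ J'') [] 0 = ∅ := rfl
          have f1 : elt (J' ∪ J'') [] 1 = J' ∪ J'' := rfl
          rw [e0, e1, e2, f0, f1]
          have h1 : alphaWt q I J' J''
              (∅ : Finset ℕ) (∅ ∪ {mM J' J'' ((J' ∪ J'') \ ∅)}) = 1 := by
            rw [alphaWt]
            have hw : wexp I J' J''
                (∅ : Finset ℕ) (∅ ∪ {mM J' J'' ((J' ∪ J'') \ ∅)}) = 0 := by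
              rw [wexp, hJe]
              simp [hJ'e, linv_empty_right', linv_empty_left',
                Finset.empty_sdiff, linv_eq_zero]
            rw [hw, zpow_zero]
          have h2 : alphaWt q I J' J''
              (∅ ∪ {mM J' J'' ((J' ∪ J'') \ ∅)}) (J' ∪ J'') = 1 :=
            alpha_of_subset q I J' J'' (by rw [hJe]; exact Finset.empty_subset _)
          have h3 : alphaWt q I J' J'' (∅ : Finset ℕ) (J' ∪ J'') = 1 :=
            alpha_of_subset q I J' J'' (by rw [hJe])
          rw [h1, h2, h3, one_mul]
        · exact absurd (oneHat_regular hdisj hJne) (hirr _)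
  · -- the linv identity
    intro A C hAC hCJ hne
    have hKJ : C \ A ⊆ J' ∪ J'' := Finset.Subset.trans Finset.sdiff_subset hCJ
    obtain ⟨k1, k2⟩ := key_linv hdisj hlt hne hKJ
    rw [sdiff_union_singleton, k1, k2]
    ring
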